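/- arXiv:1504.03725 — 5 statements merged into one kernel-verified Lean document; each statement's English description precedes it below -/
import Mathlib

section
/- Let A, B be symmetric positive semidefinite matrices with A ≥ B (i.e., A - B positive semidefinite). Then the Kronecker products satisfy A ⊗ A ≥ B ⊗ B (i.e., A⊗A - B⊗B is positive semidefinite). -/
open Matrix Kronecker

lemma psd_kron {n m : ℕ} {A : Matrix (Fin n) (Fin n) ℝ} {B : Matrix (Fin m) (Fin m) ℝ}
    (hA : A.PosSemidef) (hB : B.PosSemidef) : (A ⊗ₖ B).PosSemidef := by
  obtain ⟨C, rfl⟩ : ∃ C : Matrix (Fin n) (Fin n) ℝ, A = Cᴴ * C := by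
    open scoped MatrixOrder in exact CStarAlgebra.nonneg_iff_eq_star_mul_self.mp hA.nonneg
  obtain ⟨D, rfl⟩ : ∃ D : Matrix (Fin m) (Fin m) ℝ, B = Dᴴ * D := by
    open scoped MatrixOrder in exact CStarAlgebra.nonneg_iff_eq_star_mul_self.mp hB.nonneg
  rw [Matrix.mul_kronecker_mul]
  have : Cᴴ ⊗ₖ Dᴴ = (C ⊗ₖ D)ᴴ := by
    simp [Matrix.conjTranspose, ← Matrix.kroneckerMap_transpose]
    rfl
  rw [this]
  exact Matrix.posSemidef_conjTranspose_mul_self _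

/-- If `A ≥ B ≥ 0` in the Loewner order, then `A ⊗ A ≥ B ⊗ B`. -/
theorem kronecker_loewner_mono
    {n : ℕ} (A B : Matrix (Fin n) (Fin n) ℝ)
    (hA : A.PosSemidef) (hB : B.PosSemidef) (hAB : (A - B).PosSemidef) :
    (A ⊗ₖ A - B ⊗ₖ B).PosSemidef := by
  have key : A ⊗ₖ A - B ⊗ₖ B = A ⊗ₖ (A - B) + (A - B) ⊗ₖ B := by
    ext i j
    simp [Matrix.kroneckerMap_apply, Matrix.sub_apply, Matrix.add_apply]
    ring
  rw [key]
  exact (psd_kron hA hAB).add (psd_kron hAB hB)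
end

section
/- Let K, Q be symmetric positive definite / positive semidefinite matrices respectively, and t > 0. Then (1 + 1/t)·K⁻¹ ⊗ K⁻¹ - (K+Q)⁻¹ ⊗ (K+Q)⁻¹ is positive definite. -/
open Matrix Kronecker

set_option linter.unusedSectionVars false

section Aux
variable {ι κ : Type*} [Fintype ι] [Fintype κ] [DecidableEq ι] [DecidableEq κ]

lemma kron_psd {A : Matrix ι ι ℝ} {B : Matrix κ κ ℝ} (hA : A.PosSemidef) (hB : B.PosSemidef) :
    (A ⊗ₖ B).PosSemidef := by
  obtain ⟨A₁, rfl⟩ : ∃ A₁ : Matrix ι ι ℝ, A = A₁ᴴ * A₁ := by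
    open scoped MatrixOrder Matrix.Norms.L2Operator in
    exact CStarAlgebra.nonneg_iff_eq_star_mul_self.mp hA.nonneg
  obtain ⟨B₁, rfl⟩ : ∃ B₁ : Matrix κ κ ℝ, B = B₁ᴴ * B₁ := by
    open scoped MatrixOrder Matrix.Norms.L2Operator in
    exact CStarAlgebra.nonneg_iff_eq_star_mul_self.mp hB.nonneg
  have hct : (A₁ ⊗ₖ B₁)ᴴ = A₁ᴴ ⊗ₖ B₁ᴴ := by
    ext ⟨i, j⟩ ⟨k, l⟩
    simp [Matrix.conjTranspose_apply, Matrix.kroneckerMap_apply]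
  have h : (A₁ᴴ * A₁) ⊗ₖ (B₁ᴴ * B₁) = (A₁ ⊗ₖ B₁)ᴴ * (A₁ ⊗ₖ B₁) := by
    rw [Matrix.mul_kronecker_mul, hct]
  rw [h]
  exact Matrix.posSemidef_conjTranspose_mul_self _

lemma psd_posdef_of_det {M : Matrix ι ι ℝ} (hM : M.PosSemidef)
    (hdet : M.det ≠ 0) : M.PosDef := by
  refine ⟨hM.1, fun x hx => ?_⟩
  rcases lt_or_eq_of_le (hM.2 x) with h | h
  · exact h
  exfalso
  apply hx
  have hMx : M *ᵥ x = 0 := (hM.dotProduct_mulVec_zero_iff x).mp (by simpa [dotProduct, mulVec, Finsupp.sum_fintype, Finset.mul_sum, mul_assoc] using h.symm)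
  have : M⁻¹ *ᵥ (M *ᵥ x) = x := by
    rw [Matrix.mulVec_mulVec, Matrix.nonsing_inv_mul _ (isUnit_iff_ne_zero.mpr hdet), Matrix.one_mulVec]
  rw [hMx, Matrix.mulVec_zero] at this
  exact Finsupp.coe_eq_zero.mp this.symm

lemma kron_posdef {A : Matrix ι ι ℝ} {B : Matrix κ κ ℝ} (hA : A.PosDef) (hB : B.PosDef) :
    (A ⊗ₖ B).PosDef := by
  have h1 := kron_psd hA.posSemidef hB.posSemidef
  refine psd_posdef_of_det h1 ?_
  rw [Matrix.det_kronecker]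
  exact ne_of_gt (mul_pos (pow_pos hA.det_pos _) (pow_pos hB.det_pos _))

lemma posdef_smul {M : Matrix ι ι ℝ} (hM : M.PosDef) {c : ℝ} (hc : 0 < c) :
    (c • M).PosDef := by
  refine ⟨?_, fun x hx => ?_⟩
  · unfold Matrix.IsHermitian
    rw [Matrix.conjTranspose_smul, hM.1.eq]
    simp
  · have := mul_pos hc (hM.2 hx)
    simp only [Finsupp.mul_sum] at this
    simpa [mul_comm, mul_left_comm, mul_assoc] using this

lemma inv_sub_inv_psd {K Q : Matrix ι ι ℝ} (hK : K.PosDef) (hQ : Q.PosSemidef) :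
    (K⁻¹ - (K + Q)⁻¹).PosSemidef := by
  set M := K + Q with hMdef
  have hM : M.PosDef := hK.add_posSemidef hQ
  have hKu : IsUnit K.det := isUnit_iff_ne_zero.mpr (ne_of_gt hK.det_pos)
  have hMu : IsUnit M.det := isUnit_iff_ne_zero.mpr (ne_of_gt hM.det_pos)
  have key : K⁻¹ - M⁻¹ = M⁻¹ * (Q + Q * K⁻¹ * Q) * M⁻¹ := by
    have h1 : Q + Q * K⁻¹ * Q = Q * K⁻¹ * M := by
      rw [hMdef, Matrix.mul_add, Matrix.mul_assoc Q K⁻¹ K,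
        Matrix.nonsing_inv_mul _ hKu, Matrix.mul_one]
    rw [h1, Matrix.mul_assoc, Matrix.mul_assoc, Matrix.mul_nonsing_inv _ hMu, Matrix.mul_one,
      ← Matrix.mul_assoc]
    have h2 : K⁻¹ - M⁻¹ = M⁻¹ * (M * K⁻¹ - 1) := by
      rw [Matrix.mul_sub, ← Matrix.mul_assoc, Matrix.nonsing_inv_mul _ hMu, Matrix.one_mul,
        Matrix.mul_one]
    rw [h2, hMdef, Matrix.add_mul, Matrix.mul_nonsing_inv _ hKu, add_sub_cancel_left,
      Matrix.mul_assoc]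
  rw [key]
  have hpsd : (Q + Q * K⁻¹ * Q).PosSemidef := by
    refine hQ.add ?_
    have := hK.inv.posSemidef.conjTranspose_mul_mul_same Q
    rwa [hQ.1.eq] at this
  have hMinvH : (M⁻¹)ᴴ = M⁻¹ := hM.inv.1.eq
  have := hpsd.conjTranspose_mul_mul_same M⁻¹
  rwa [hMinvH] at this

end Aux

/-- For `K ≻ 0`, `Q ⪰ 0` and `t > 0`, the matrix
`(1 + 1/t) K⁻¹ ⊗ K⁻¹ - (K+Q)⁻¹ ⊗ (K+Q)⁻¹` is positive definite. -/
theorem barrier_hessian_posdef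
    {n : ℕ} (K Q : Matrix (Fin n) (Fin n) ℝ) (t : ℝ)
    (hK : K.PosDef) (hQ : Q.PosSemidef) (ht : 0 < t) :
    ((1 + 1 / t) • (K⁻¹ ⊗ₖ K⁻¹) - (K + Q)⁻¹ ⊗ₖ (K + Q)⁻¹).PosDef := by
  set A := K⁻¹ with hAdef
  set B := (K + Q)⁻¹ with hBdef
  have hA : A.PosDef := hK.inv
  have hB : B.PosDef := (hK.add_posSemidef hQ).inv
  have hD : (A - B).PosSemidef := inv_sub_inv_psd hK hQ
  have key : (1 + 1 / t) • (A ⊗ₖ A) - B ⊗ₖ B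
      = (1 / t) • (A ⊗ₖ A) + (A ⊗ₖ (A - B) + (A - B) ⊗ₖ B) := by
    ext ⟨i, j⟩ ⟨k, l⟩
    simp [Matrix.kroneckerMap_apply, Matrix.sub_apply, Matrix.add_apply, Matrix.smul_apply]
    ring
  rw [key]
  exact (posdef_smul (kron_posdef hA hA) (by positivity)).add_posSemidef
    ((kron_psd hA.posSemidef hD).add (kron_psd hD hB.posSemidef))
end

section
/- Let W, W2 be symmetric positive semidefinite matrices with W ≥ W2, and let R be symmetric positive semidefinite. Then (I + W R)⁻¹ W ≥ (I + W2 R)⁻¹ W2 in the Loewner order (both matrices are symmetric whenever the inverses exist, which they do since I + W R has positive determinant for W, R ⪰ 0). -/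
open Matrix

/-- For `P, Q` real PSD, `1 + P * Q` is invertible. -/
lemma isUnit_det_one_add_psd_mul {m : ℕ} {P Q : Matrix (Fin m) (Fin m) ℝ}
    (hP : P.PosSemidef) (hQ : Q.PosSemidef) : IsUnit (1 + P * Q).det := by
  rw [isUnit_iff_ne_zero]
  intro hdet
  obtain ⟨v, hv, hv0⟩ := (Matrix.exists_mulVec_eq_zero_iff).mpr hdet
  have h1 : v + P *ᵥ (Q *ᵥ v) = 0 := by
    simpa [add_mulVec, one_mulVec, mulVec_mulVec] using hv0
  have hQ0 : (0:ℝ) ≤ v ⬝ᵥ Q *ᵥ v := by simpa using hQ.dotProduct_mulVec_nonneg v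
  have hP0 : (0:ℝ) ≤ (Q *ᵥ v) ⬝ᵥ P *ᵥ (Q *ᵥ v) := by simpa using hP.dotProduct_mulVec_nonneg (Q *ᵥ v)
  have key : (v ⬝ᵥ Q *ᵥ v) + ((Q *ᵥ v) ⬝ᵥ P *ᵥ (Q *ᵥ v)) = 0 := by
    have := congrArg (fun w => (Q *ᵥ v) ⬝ᵥ w) h1
    simpa [dotProduct_add, dotProduct_comm (Q *ᵥ v) v] using this
  have hq : v ⬝ᵥ Q *ᵥ v = 0 := by linarith
  have hQv : Q *ᵥ v = 0 := (hQ.dotProduct_mulVec_zero_iff v).mp (by simpa using hq)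
  apply hv
  have := h1
  rw [hQv, mulVec_zero, add_zero] at this
  exact this

/-- For `P, Q` real PSD, `(1 + P*Q)⁻¹ * P = P * (1 + Q*P)⁻¹`. -/
lemma inv_one_add_mul_comm {m : ℕ} {P Q : Matrix (Fin m) (Fin m) ℝ}
    (hP : P.PosSemidef) (hQ : Q.PosSemidef) :
    (1 + P * Q)⁻¹ * P = P * (1 + Q * P)⁻¹ := by
  have hA : IsUnit (1 + P * Q).det := isUnit_det_one_add_psd_mul hP hQ
  have hC : IsUnit (1 + Q * P).det := isUnit_det_one_add_psd_mul hQ hP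
  have h : (1 + P * Q) * P = P * (1 + Q * P) := by noncomm_ring
  calc (1 + P * Q)⁻¹ * P
      = (1 + P * Q)⁻¹ * (P * (1 + Q * P)) * (1 + Q * P)⁻¹ := by
        rw [← Matrix.mul_assoc, Matrix.mul_nonsing_inv_cancel_right _ _ hC]
    _ = (1 + P * Q)⁻¹ * ((1 + P * Q) * P) * (1 + Q * P)⁻¹ := by rw [h]
    _ = P * (1 + Q * P)⁻¹ := by
        rw [← Matrix.mul_assoc, Matrix.nonsing_inv_mul _ hA, Matrix.one_mul]

/-- For `P, Q` real PSD, `(1 + P*Q)⁻¹ * P` is PSD. -/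
lemma posSemidef_inv_one_add_mul {m : ℕ} {P Q : Matrix (Fin m) (Fin m) ℝ}
    (hP : P.PosSemidef) (hQ : Q.PosSemidef) :
    ((1 + P * Q)⁻¹ * P).PosSemidef := by
  have hC : IsUnit (1 + Q * P).det := isUnit_det_one_add_psd_mul hQ hP
  have hcomm := inv_one_add_mul_comm hP hQ
  apply PosSemidef.of_dotProduct_mulVec_nonneg
  · show ((1 + P * Q)⁻¹ * P)ᴴ = _
    rw [conjTranspose_mul, Matrix.conjTranspose_nonsing_inv, conjTranspose_add,
      conjTranspose_one, conjTranspose_mul, hP.1.eq, hQ.1.eq, hcomm]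
  · intro x
    set y := (1 + Q * P)⁻¹ *ᵥ x with hy
    have hx : x = (1 + Q * P) *ᵥ y := by
      rw [hy, mulVec_mulVec, Matrix.mul_nonsing_inv _ hC, one_mulVec]
    have hMx : ((1 + P * Q)⁻¹ * P) *ᵥ x = P *ᵥ y := by
      rw [hcomm, ← mulVec_mulVec, ← hy]
    rw [hMx]
    have : star x ⬝ᵥ P *ᵥ y
        = y ⬝ᵥ P *ᵥ y + (P *ᵥ y) ⬝ᵥ Q *ᵥ (P *ᵥ y) := by
      rw [show star x = x from funext fun i => star_trivial _, hx, add_mulVec,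
        one_mulVec, add_dotProduct, ← mulVec_mulVec,
        dotProduct_comm (Q *ᵥ (P *ᵥ y)) (P *ᵥ y)]
    rw [this]
    have h1 : (0:ℝ) ≤ y ⬝ᵥ P *ᵥ y := by simpa using hP.dotProduct_mulVec_nonneg y
    have h2 : (0:ℝ) ≤ (P *ᵥ y) ⬝ᵥ Q *ᵥ (P *ᵥ y) := by simpa using hQ.dotProduct_mulVec_nonneg (P *ᵥ y)
    simpa using add_nonneg h1 h2

/-- For symmetric positive semidefinite `W ≥ W2` and `R ⪰ 0`,
`(I + W R)⁻¹ W ≥ (I + W2 R)⁻¹ W2` in the Loewner order. -/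
theorem Z_loewner_mono
    {m : ℕ} (W W2 R : Matrix (Fin m) (Fin m) ℝ)
    (hW : W.PosSemidef) (hW2 : W2.PosSemidef) (hR : R.PosSemidef)
    (hWW2 : (W - W2).PosSemidef) :
    ((1 + W * R)⁻¹ * W - (1 + W2 * R)⁻¹ * W2).PosSemidef := by
  set A := 1 + W * R with hA
  set B := 1 + W2 * R with hB
  set C := 1 + R * W2 with hC
  set D := W - W2 with hD
  have hdA : IsUnit A.det := isUnit_det_one_add_psd_mul hW hR
  have hdC : IsUnit C.det := isUnit_det_one_add_psd_mul hR hW2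
  have hdAT : IsUnit (1 + R * W).det := isUnit_det_one_add_psd_mul hR hW
  -- step (i): B⁻¹ * W2 = W2 * C⁻¹
  have hi : B⁻¹ * W2 = W2 * C⁻¹ := inv_one_add_mul_comm hW2 hR
  -- step (ii): Z1 - Z2 = A⁻¹ * D * C⁻¹
  have hii : A⁻¹ * W - B⁻¹ * W2 = A⁻¹ * D * C⁻¹ := by
    have hDeq : W * C - A * W2 = D := by rw [hA, hC, hD]; noncomm_ring
    calc A⁻¹ * W - B⁻¹ * W2
        = A⁻¹ * (W * C) * C⁻¹ - A⁻¹ * (A * W2 * C⁻¹) := by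
          rw [Matrix.mul_assoc A⁻¹ (W * C) C⁻¹,
            Matrix.mul_nonsing_inv_cancel_right _ _ hdC, hi,
            Matrix.mul_assoc A W2 C⁻¹, Matrix.nonsing_inv_mul_cancel_left _ _ hdA]
      _ = A⁻¹ * (W * C - A * W2) * C⁻¹ := by
          rw [Matrix.mul_sub, Matrix.sub_mul, Matrix.mul_assoc A⁻¹ (A * W2) C⁻¹]
      _ = A⁻¹ * D * C⁻¹ := by rw [hDeq]
  -- step (iii): C⁻¹ = (1 + (C⁻¹ * R) * D) * (1 + R * W)⁻¹
  have hiii : C⁻¹ = (1 + C⁻¹ * R * D) * (1 + R * W)⁻¹ := by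
    have h1 : C⁻¹ * (1 + R * W) = 1 + C⁻¹ * R * D := by
      have hsplit : (1 : Matrix (Fin m) (Fin m) ℝ) + R * W = C + R * D := by
        rw [hC, hD]; noncomm_ring
      rw [hsplit, Matrix.mul_add, Matrix.nonsing_inv_mul _ hdC, ← Matrix.mul_assoc]
    calc C⁻¹ = C⁻¹ * (1 + R * W) * (1 + R * W)⁻¹ := by
          rw [Matrix.mul_nonsing_inv_cancel_right _ _ hdAT]
      _ = (1 + C⁻¹ * R * D) * (1 + R * W)⁻¹ := by rw [h1]
  -- the conjugate-transpose of A⁻¹ is (1 + R * W)⁻¹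
  have hAH : (A⁻¹)ᴴ = (1 + R * W)⁻¹ := by
    rw [Matrix.conjTranspose_nonsing_inv, hA, conjTranspose_add, conjTranspose_one,
      conjTranspose_mul, hW.1.eq, hR.1.eq]
  -- middle matrix is PSD
  have hN : (C⁻¹ * R).PosSemidef := posSemidef_inv_one_add_mul hR hW2
  have hMid : (D + D * (C⁻¹ * R) * D).PosSemidef := by
    have := hN.mul_mul_conjTranspose_same D
    rw [hWW2.1.eq] at this
    exact hWW2.add (by simpa [Matrix.mul_assoc] using this)
  -- assemble
  have hfinal : (1 + W * R)⁻¹ * W - (1 + W2 * R)⁻¹ * W2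
      = A⁻¹ * (D + D * (C⁻¹ * R) * D) * (A⁻¹)ᴴ := by
    rw [← hA, ← hB, hii, hAH]
    calc A⁻¹ * D * C⁻¹
        = A⁻¹ * D * ((1 + C⁻¹ * R * D) * (1 + R * W)⁻¹) := by rw [← hiii]
      _ = A⁻¹ * (D + D * (C⁻¹ * R) * D) * (1 + R * W)⁻¹ := by
          noncomm_ring
  rw [hfinal]
  exact hMid.mul_mul_conjTranspose_same A⁻¹
end

section
/- For symmetric positive definite W1, W2 and positive semidefinite R, the function C(R) = (1/2)(ln det(I + W1 R) - ln det(I + W2 R)) satisfies C(R) ≥ 0 for all R ⪰ 0 whenever W1 ≥ W2 (degraded case), and moreover C is concave on the cone of positive semidefinite matrices in this case. -/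
open Matrix BigOperators

section Helpers

variable {k : ℕ}

open scoped MatrixOrder in
noncomputable def Matrix.PosSemidef.sqrt {A : Matrix (Fin k) (Fin k) ℝ} (_ : A.PosSemidef) :
    Matrix (Fin k) (Fin k) ℝ := CFC.sqrt A

open scoped MatrixOrder in
lemma Matrix.PosSemidef.sqrt_mul_self {A : Matrix (Fin k) (Fin k) ℝ} (hA : A.PosSemidef) :
    hA.sqrt * hA.sqrt = A := CFC.sqrt_mul_sqrt_self A hA.nonneg

open scoped MatrixOrder in
lemma Matrix.PosSemidef.posSemidef_sqrt {A : Matrix (Fin k) (Fin k) ℝ} (hA : A.PosSemidef) :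
    hA.sqrt.PosSemidef := (CFC.sqrt_nonneg A).posSemidef



lemma psd_smul {R : Matrix (Fin k) (Fin k) ℝ} (hR : R.PosSemidef) {c : ℝ} (hc : 0 ≤ c) :
    (c • R).PosSemidef := by
  refine .of_dotProduct_mulVec_nonneg ?_ fun x => ?_
  · unfold Matrix.IsHermitian
    rw [conjTranspose_smul, hR.1]
    simp
  · rw [smul_mulVec, dotProduct_smul]
    have := hR.dotProduct_mulVec_nonneg x
    simp only [star_trivial] at this ⊢
    exact mul_nonneg hc this

lemma psd_trace_nonneg {A : Matrix (Fin k) (Fin k) ℝ} (hA : A.PosSemidef) : 0 ≤ A.trace := by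
  rw [Matrix.trace]
  refine Finset.sum_nonneg fun i _ => ?_
  have := hA.dotProduct_mulVec_nonneg (Pi.single i 1)
  simpa [dotProduct, Matrix.mulVec, Pi.single_apply, Matrix.diag] using this

lemma trace_mul_psd_nonneg {A B : Matrix (Fin k) (Fin k) ℝ} (hA : A.PosSemidef)
    (hB : B.PosSemidef) : 0 ≤ (A * B).trace := by
  have h1 : A * B = hA.sqrt * (hA.sqrt * B) := by rw [← Matrix.mul_assoc, hA.sqrt_mul_self]
  rw [h1, Matrix.trace_mul_comm]
  have h2 : hA.sqrt * B * hA.sqrt = hA.sqrtᴴ * B * hA.sqrt := by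
    rw [hA.posSemidef_sqrt.1]
  have hps : (hA.sqrtᴴ * B * hA.sqrt).PosSemidef := hB.conjTranspose_mul_mul_same _
  rw [← h2] at hps
  exact psd_trace_nonneg hps



lemma spectral_decomp {K : Matrix (Fin k) (Fin k) ℝ} (hK : K.IsHermitian) (s : ℝ) :
    1 + s • K = (hK.eigenvectorUnitary : Matrix (Fin k) (Fin k) ℝ) *
      Matrix.diagonal (fun i => 1 + s * hK.eigenvalues i) *
      (star (hK.eigenvectorUnitary : Matrix (Fin k) (Fin k) ℝ)) := by
  set U := (hK.eigenvectorUnitary : Matrix (Fin k) (Fin k) ℝ) with hUdef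
  have hU : U * star U = 1 := hK.eigenvectorUnitary.2.2
  have hdiag : Matrix.diagonal (fun i => 1 + s * hK.eigenvalues i)
      = 1 + s • Matrix.diagonal (fun i => hK.eigenvalues i) := by
    funext i j
    by_cases h : i = j <;> simp [Matrix.diagonal, Matrix.one_apply, h]
  rw [hdiag]
  have hspec : K = U * Matrix.diagonal (fun i => hK.eigenvalues i) * star U := by
    have := hK.spectral_theorem
    rw [Unitary.conjStarAlgAut_apply] at this
    exact this
  rw [Matrix.mul_add, Matrix.add_mul, Matrix.mul_one, hU, Matrix.mul_smul, Matrix.smul_mul,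
    ← hspec]

lemma det_one_add_smul_eig {K : Matrix (Fin k) (Fin k) ℝ} (hK : K.IsHermitian) (s : ℝ) :
    (1 + s • K).det = ∏ i, (1 + s * hK.eigenvalues i) := by
  rw [spectral_decomp hK s]
  set U := (hK.eigenvectorUnitary : Matrix (Fin k) (Fin k) ℝ)
  have hU : U * star U = 1 := hK.eigenvectorUnitary.2.2
  rw [Matrix.det_mul, Matrix.det_mul, mul_comm (U.det), mul_assoc, ← Matrix.det_mul, hU]
  simp [Matrix.det_diagonal]

lemma posDef_of_psd_det_pos {A : Matrix (Fin k) (Fin k) ℝ} (hA : A.PosSemidef)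
    (hd : 0 < A.det) : A.PosDef := by
  refine .of_dotProduct_mulVec_pos hA.1 fun x hx => ?_
  rcases lt_or_eq_of_le (hA.dotProduct_mulVec_nonneg x) with h | h
  · exact h
  · exfalso
    have hzero : A *ᵥ x = 0 := (hA.dotProduct_mulVec_zero_iff x).mp h.symm
    have hunit : IsUnit A.det := isUnit_iff_ne_zero.mpr (ne_of_gt hd)
    have : x = 0 := by
      have := congrArg (fun v => A⁻¹ *ᵥ v) hzero
      simpa [Matrix.mulVec_mulVec, Matrix.nonsing_inv_mul A hunit] using this
    exact hx this

lemma posDef_one_add_of_dets {K : Matrix (Fin k) (Fin k) ℝ} (hK : K.IsHermitian)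
    (h : ∀ s ∈ Set.Icc (0:ℝ) 1, 0 < (1 + s • K).det) : (1 + K).PosDef := by
  have heig : ∀ i, -1 < hK.eigenvalues i := by
    intro i
    by_contra hle
    push_neg at hle
    have hne : hK.eigenvalues i ≠ 0 := by nlinarith
    set s : ℝ := -(hK.eigenvalues i)⁻¹ with hs
    have hs0 : 0 < s := by
      rw [hs]
      have : hK.eigenvalues i < 0 := by linarith
      simp only [neg_pos]
      exact inv_neg''.mpr this
    have hs1 : s ≤ 1 := by
      rw [hs, neg_inv]
      rw [← neg_neg (1:ℝ)]
      have h2 : 1 ≤ -hK.eigenvalues i := by linarith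
      have h3 : (-hK.eigenvalues i)⁻¹ ≤ 1 := by
        rw [inv_le_one_iff₀]; right; exact h2
      linarith [h3]
    have hdet := h s ⟨le_of_lt hs0, hs1⟩
    rw [det_one_add_smul_eig hK s] at hdet
    have : (1 + s * hK.eigenvalues i) = 0 := by
      rw [hs]
      field_simp
      norm_num
    rw [Finset.prod_eq_zero (Finset.mem_univ i) this] at hdet
    exact lt_irrefl _ hdet
  -- now 1 + K is psd with positive det
  have h1 : (1 + (1:ℝ) • K) = 1 + K := by rw [one_smul]
  have hpsd : (1 + K).PosSemidef := by
    rw [← h1, spectral_decomp hK 1]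
    refine Matrix.PosSemidef.mul_mul_conjTranspose_same ?_ _
    rw [Matrix.posSemidef_diagonal_iff]
    intro i
    have := heig i
    nlinarith
  refine posDef_of_psd_det_pos hpsd ?_
  rw [← h1, det_one_add_smul_eig hK 1]
  refine Finset.prod_pos fun i _ => ?_
  have := heig i
  nlinarith



lemma trace_eq_sum_eig {A : Matrix (Fin k) (Fin k) ℝ} (hA : A.IsHermitian) :
    A.trace = ∑ i, hA.eigenvalues i := by
  set U := (hA.eigenvectorUnitary : Matrix (Fin k) (Fin k) ℝ)
  have hU : star U * U = 1 := hA.eigenvectorUnitary.2.1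
  have hspec : A = U * Matrix.diagonal (fun i => hA.eigenvalues i) * star U := by
    have := hA.spectral_theorem
    rw [Unitary.conjStarAlgAut_apply] at this
    exact this
  conv_lhs => rw [hspec]
  rw [Matrix.trace_mul_cycle, hU, Matrix.one_mul]
  simp [Matrix.trace_diagonal]

lemma log_det_le_trace {H : Matrix (Fin k) (Fin k) ℝ} (hH : H.PosDef) :
    Real.log H.det ≤ H.trace - k := by
  have hdet : H.det = ∏ i, hH.isHermitian.eigenvalues i := by
    simpa using hH.isHermitian.det_eq_prod_eigenvalues
  rw [hdet, trace_eq_sum_eig hH.isHermitian]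
  rw [Real.log_prod (fun i _ => ne_of_gt (hH.eigenvalues_pos i))]
  calc ∑ i, Real.log (hH.isHermitian.eigenvalues i)
      ≤ ∑ i, (hH.isHermitian.eigenvalues i - 1) :=
        Finset.sum_le_sum fun i _ => Real.log_le_sub_one_of_pos (hH.eigenvalues_pos i)
    _ = ∑ i, hH.isHermitian.eigenvalues i - k := by
        rw [Finset.sum_sub_distrib]
        simp


lemma one_le_det_one_add_psd {P : Matrix (Fin k) (Fin k) ℝ} (hP : P.PosSemidef) :
    1 ≤ (1 + P).det := by
  have h1 : (1 + P) = 1 + (1:ℝ) • P := by rw [one_smul]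
  rw [h1, det_one_add_smul_eig hP.1 1]
  calc (1:ℝ) = ∏ _i : Fin k, 1 := by simp
    _ ≤ ∏ i, (1 + 1 * hP.1.eigenvalues i) := by
        refine Finset.prod_le_prod (fun i _ => by norm_num) (fun i _ => ?_)
        have := hP.eigenvalues_nonneg i
        linarith

lemma posDef_one_add_psd {P : Matrix (Fin k) (Fin k) ℝ} (hP : P.PosSemidef) :
    (1 + P).PosDef := Matrix.PosDef.add_posSemidef Matrix.PosDef.one hP



lemma dp_sq (u v : Fin k → ℝ) : (u ⬝ᵥ v)^2 ≤ (u ⬝ᵥ u) * (v ⬝ᵥ v) := by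
  have := Finset.sum_mul_sq_le_sq_mul_sq Finset.univ u v
  simpa [dotProduct, pow_two] using this

lemma dp_self_nonneg (v : Fin k → ℝ) : 0 ≤ v ⬝ᵥ v :=
  Finset.sum_nonneg fun i _ => mul_self_nonneg _

lemma dp_self_pos {v : Fin k → ℝ} (hv : v ≠ 0) : 0 < v ⬝ᵥ v := by
  rcases (dp_self_nonneg v).lt_or_eq with h | h
  · exact h
  · exact absurd ((dotProduct_self_eq_zero).mp h.symm) hv

lemma swap_posDef {A : Matrix (Fin k) (Fin k) ℝ} (h : (1 - Aᵀ * A).PosDef) :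
    (1 - A * Aᵀ).PosDef := by
  have key : ∀ w : Fin k → ℝ, w ≠ 0 → (A *ᵥ w) ⬝ᵥ (A *ᵥ w) < w ⬝ᵥ w := by
    intro w hw
    have := h.dotProduct_mulVec_pos hw
    simp only [star_trivial, Matrix.sub_mulVec, Matrix.one_mulVec, dotProduct_sub] at this
    have hAw : w ⬝ᵥ ((Aᵀ * A) *ᵥ w) = (A *ᵥ w) ⬝ᵥ (A *ᵥ w) := by
      rw [← Matrix.mulVec_mulVec, Matrix.dotProduct_mulVec, Matrix.vecMul_transpose]
    rw [hAw] at this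
    linarith
  refine PosDef.of_dotProduct_mulVec_pos ?_ ?_
  · have h1 : (1 - A * Aᵀ)ᵀ = 1 - A * Aᵀ := by
      rw [Matrix.transpose_sub, Matrix.transpose_mul, Matrix.transpose_transpose,
        Matrix.transpose_one]
    unfold Matrix.IsHermitian
    rw [conjTranspose_eq_transpose_of_trivial, h1]
  · intro v hv
    simp only [star_trivial, Matrix.sub_mulVec, Matrix.one_mulVec, dotProduct_sub]
    have hvv : 0 < v ⬝ᵥ v := dp_self_pos hv
    have hAAv : v ⬝ᵥ ((A * Aᵀ) *ᵥ v) = (Aᵀ *ᵥ v) ⬝ᵥ (Aᵀ *ᵥ v) := by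
      rw [← Matrix.mulVec_mulVec, Matrix.dotProduct_mulVec, ← Matrix.mulVec_transpose]
    rw [hAAv]
    set u := Aᵀ *ᵥ v with hu
    by_cases hu0 : u = 0
    · rw [hu0]
      simpa using hvv
    · have h1 : (u ⬝ᵥ u)^2 = ((A *ᵥ u) ⬝ᵥ v)^2 := by
        congr 1
        rw [Matrix.dotProduct_mulVec u, Matrix.vecMul_transpose, dotProduct_comm]
      have h2 : ((A *ᵥ u) ⬝ᵥ v)^2 ≤ ((A *ᵥ u) ⬝ᵥ (A *ᵥ u)) * (v ⬝ᵥ v) := dp_sq _ _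
      have h3 : (A *ᵥ u) ⬝ᵥ (A *ᵥ u) < u ⬝ᵥ u := key u hu0
      have huu : 0 < u ⬝ᵥ u := dp_self_pos hu0
      nlinarith [h1, h2, h3, huu, hvv]




-- determinant identity F
lemma det_one_add_psd_mul {X Y : Matrix (Fin k) (Fin k) ℝ} (hX : X.PosSemidef) :
    (1 + X * Y).det = (1 + hX.sqrt * Y * hX.sqrt).det := by
  have h1 : X * Y = hX.sqrt * (hX.sqrt * Y) := by rw [← Matrix.mul_assoc, hX.sqrt_mul_self]
  rw [h1, Matrix.det_one_add_mul_comm, Matrix.mul_assoc]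

lemma det_le_det_add_psd {H P : Matrix (Fin k) (Fin k) ℝ} (hH : H.PosDef) (hP : P.PosSemidef) :
    H.det ≤ (H + P).det := by
  set S := hH.posSemidef.sqrt with hS
  have hSS : S * S = H := hH.posSemidef.sqrt_mul_self
  have hdetS : S.det * S.det = H.det := by rw [← Matrix.det_mul, hSS]
  have hdSpos : 0 < S.det * S.det := hdetS ▸ hH.det_pos
  have hdSne : S.det ≠ 0 := fun h => by simp [h] at hdSpos
  have hSunit : IsUnit S.det := isUnit_iff_ne_zero.mpr hdSne
  have hSsymm : Sᴴ = S := hH.posSemidef.posSemidef_sqrt.1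
  have hBsymm : (S⁻¹)ᴴ = S⁻¹ := by rw [Matrix.conjTranspose_nonsing_inv, hSsymm]
  have hSB : S * S⁻¹ = 1 := Matrix.mul_nonsing_inv S hSunit
  have hBS : S⁻¹ * S = 1 := Matrix.nonsing_inv_mul S hSunit
  have hpsd : (S⁻¹ * P * (S⁻¹)ᴴ).PosSemidef := hP.mul_mul_conjTranspose_same _
  have hiden : H + P = S * (1 + S⁻¹ * P * (S⁻¹)ᴴ) * S := by
    rw [Matrix.mul_add, Matrix.add_mul, Matrix.mul_one, hSS, hBsymm]
    congr 1
    symm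
    calc S * (S⁻¹ * P * S⁻¹) * S = S * S⁻¹ * (P * (S⁻¹ * S)) := by
          simp only [Matrix.mul_assoc]
      _ = P := by rw [hSB, hBS, Matrix.one_mul, Matrix.mul_one]
  calc H.det = H.det * 1 := by ring
    _ ≤ H.det * (1 + S⁻¹ * P * (S⁻¹)ᴴ).det := by
        have := one_le_det_one_add_psd hpsd
        nlinarith [hH.det_pos]
    _ = (H + P).det := by
        rw [hiden, Matrix.det_mul, Matrix.det_mul, ← hdetS]
        ring




lemma left_cancel {M A B : Matrix (Fin k) (Fin k) ℝ} (h : IsUnit M.det)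
    (hMA : M * A = M * B) : A = B := by
  have := congrArg (fun X => M⁻¹ * X) hMA
  simpa [← Matrix.mul_assoc, Matrix.nonsing_inv_mul M h] using this

lemma dp_symm {M : Matrix (Fin k) (Fin k) ℝ} (hM : M.IsHermitian) (x y : Fin k → ℝ) :
    (M *ᵥ x) ⬝ᵥ y = x ⬝ᵥ (M *ᵥ y) := by
  have hMt : Mᵀ = M := by
    have := hM
    rwa [Matrix.IsHermitian, conjTranspose_eq_transpose_of_trivial] at this
  rw [Matrix.dotProduct_mulVec x, ← Matrix.mulVec_transpose, hMt, dotProduct_comm]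

section Qfacts

-- S plays the role of √W, T the role of √R
variable {W R S T : Matrix (Fin k) (Fin k) ℝ}

lemma HW_posDef (hS : S.PosSemidef) (hR : R.PosSemidef) : (1 + S * R * S).PosDef := by
  refine posDef_one_add_psd ?_
  have := hR.mul_mul_conjTranspose_same S
  rwa [hS.1] at this

lemma HW_unit (hS : S.PosSemidef) (hR : R.PosSemidef) : IsUnit (1 + S * R * S).det :=
  isUnit_iff_ne_zero.mpr (ne_of_gt (HW_posDef hS hR).det_pos)

lemma Qm_psd (hS : S.PosSemidef) (hR : R.PosSemidef) :
    (S * (1 + S * R * S)⁻¹ * S).PosSemidef := by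
  have hinv : ((1 + S * R * S)⁻¹).PosDef := (HW_posDef hS hR).inv
  have := hinv.posSemidef.mul_mul_conjTranspose_same S
  rwa [hS.1] at this

lemma Q_id1 (hS : S.PosSemidef) (hR : R.PosSemidef) (hSS : S * S = W) :
    (1 + W * R) * (S * (1 + S * R * S)⁻¹ * S) = W := by
  have h1 : (1 + W * R) * S = S * (1 + S * R * S) := by
    rw [Matrix.add_mul, Matrix.one_mul, Matrix.mul_add, Matrix.mul_one]
    congr 1
    rw [← hSS]
    simp only [Matrix.mul_assoc]
  calc (1 + W * R) * (S * (1 + S * R * S)⁻¹ * S)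
      = ((1 + W * R) * S) * (1 + S * R * S)⁻¹ * S := by simp only [Matrix.mul_assoc]
    _ = S * ((1 + S * R * S) * (1 + S * R * S)⁻¹) * S := by rw [h1]; simp only [Matrix.mul_assoc]
    _ = W := by rw [Matrix.mul_nonsing_inv _ (HW_unit hS hR), Matrix.mul_one, hSS]

lemma Q_unit (hS : S.PosSemidef) (hR : R.PosSemidef) (hSS : S * S = W) :
    IsUnit (1 + W * R).det := by
  have : (1 + W * R).det = (1 + S * R * S).det := by
    have h1 : W * R = S * (S * R) := by rw [← Matrix.mul_assoc, hSS]
    rw [h1, Matrix.det_one_add_mul_comm, Matrix.mul_assoc]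
  rw [this]
  exact HW_unit hS hR

end Qfacts

section Qfacts2

variable {W R S T : Matrix (Fin k) (Fin k) ℝ}

lemma Q_id2 (hS : S.PosSemidef) (hR : R.PosSemidef) (hW : W.PosSemidef)
    (hT : T.PosSemidef) (hSS : S * S = W) (hTT : T * T = R) :
    S * (1 + S * R * S)⁻¹ * S = W - W * T * (1 + T * W * T)⁻¹ * (T * W) := by
  refine left_cancel (Q_unit hS hR hSS) ?_
  rw [Q_id1 hS hR hSS]
  have h1 : (1 + W * R) * (W * T) = W * T * (1 + T * W * T) := by
    rw [Matrix.add_mul, Matrix.one_mul, Matrix.mul_add, Matrix.mul_one]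
    congr 1
    calc W * R * (W * T) = W * (T * T) * (W * T) := by rw [hTT]
      _ = W * T * (T * W * T) := by simp only [Matrix.mul_assoc]
  have h2 : (1 + W * R) * (W * T * (1 + T * W * T)⁻¹ * (T * W)) = W * R * W := by
    calc (1 + W * R) * (W * T * (1 + T * W * T)⁻¹ * (T * W))
        = ((1 + W * R) * (W * T)) * (1 + T * W * T)⁻¹ * (T * W) := by
          simp only [Matrix.mul_assoc]
      _ = W * T * ((1 + T * W * T) * (1 + T * W * T)⁻¹) * (T * W) := by
          rw [h1]; simp only [Matrix.mul_assoc]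
      _ = W * T * (T * W) := by rw [Matrix.mul_nonsing_inv _ (HW_unit hT hW), Matrix.mul_one]
      _ = W * R * W := by rw [← hTT]; simp only [Matrix.mul_assoc]
  rw [Matrix.mul_sub, h2, Matrix.add_mul, Matrix.one_mul]
  abel

end Qfacts2

section Qvar

variable {W R T : Matrix (Fin k) (Fin k) ℝ}

lemma Q_quad (hW : W.PosSemidef) (hT : T.PosSemidef) (hR : R.PosSemidef) (hTT : T * T = R)
    (v u : Fin k → ℝ) :
    u ⬝ᵥ u + (T *ᵥ u + v) ⬝ᵥ (W *ᵥ (T *ᵥ u + v))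
      = v ⬝ᵥ ((W - W * T * (1 + T * W * T)⁻¹ * (T * W)) *ᵥ v)
        + (u + (1 + T * W * T)⁻¹ *ᵥ (T *ᵥ (W *ᵥ v))) ⬝ᵥ
          ((1 + T * W * T) *ᵥ (u + (1 + T * W * T)⁻¹ *ᵥ (T *ᵥ (W *ᵥ v)))) := by
  set H := 1 + T * W * T with hH
  have hHpd : H.PosDef := HW_posDef hT hW
  have hHherm : H.IsHermitian := hHpd.isHermitian
  have hHinvherm : (H⁻¹).IsHermitian := hHpd.inv.isHermitian
  have hHunit : IsUnit H.det := isUnit_iff_ne_zero.mpr (ne_of_gt hHpd.det_pos)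
  set b := T *ᵥ (W *ᵥ v) with hb
  set c := H⁻¹ *ᵥ b with hc
  have hHc : H *ᵥ c = b := by
    rw [hc, Matrix.mulVec_mulVec, Matrix.mul_nonsing_inv _ hHunit, Matrix.one_mulVec]
  -- expand quadratic form g
  have hTu : ∀ x : Fin k → ℝ, (T *ᵥ x) ⬝ᵥ (W *ᵥ (T *ᵥ x)) = x ⬝ᵥ ((T * W * T) *ᵥ x) := by
    intro x
    rw [dp_symm hT.1, Matrix.mulVec_mulVec, Matrix.mulVec_mulVec]
  have hcross : ∀ x : Fin k → ℝ, (T *ᵥ x) ⬝ᵥ (W *ᵥ v) = x ⬝ᵥ b := by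
    intro x
    rw [dp_symm hT.1, hb]
  have hcross2 : ∀ x : Fin k → ℝ, v ⬝ᵥ (W *ᵥ (T *ᵥ x)) = b ⬝ᵥ x := by
    intro x
    rw [← dp_symm hW.1, ← dp_symm hT.1, hb]
  have hg : u ⬝ᵥ u + (T *ᵥ u + v) ⬝ᵥ (W *ᵥ (T *ᵥ u + v))
      = u ⬝ᵥ (H *ᵥ u) + 2 * (u ⬝ᵥ b) + v ⬝ᵥ (W *ᵥ v) := by
    rw [Matrix.mulVec_add, dotProduct_add, add_dotProduct, add_dotProduct,
      hTu, hcross, hcross2]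
    have hHu : u ⬝ᵥ (H *ᵥ u) = u ⬝ᵥ u + u ⬝ᵥ ((T * W * T) *ᵥ u) := by
      rw [hH, Matrix.add_mulVec, Matrix.one_mulVec, dotProduct_add]
    rw [hHu, dotProduct_comm b u]
    ring
  -- value of the Q-form
  have hQv : v ⬝ᵥ ((W - W * T * H⁻¹ * (T * W)) *ᵥ v)
      = v ⬝ᵥ (W *ᵥ v) - b ⬝ᵥ c := by
    rw [Matrix.sub_mulVec, dotProduct_sub]
    congr 1
    have h1 : (W * T * H⁻¹ * (T * W)) *ᵥ v = W *ᵥ (T *ᵥ c) := by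
      rw [hc, hb]
      simp only [← Matrix.mulVec_mulVec, Matrix.mul_assoc]
    rw [h1, ← dp_symm hW.1, ← dp_symm hT.1, hb]
  -- expand z H z
  have hz : (u + c) ⬝ᵥ (H *ᵥ (u + c))
      = u ⬝ᵥ (H *ᵥ u) + 2 * (u ⬝ᵥ b) + b ⬝ᵥ c := by
    rw [Matrix.mulVec_add, dotProduct_add, add_dotProduct, add_dotProduct, hHc]
    have h2 : c ⬝ᵥ (H *ᵥ u) = b ⬝ᵥ u := by rw [← dp_symm hHherm, hHc]
    have h3 : c ⬝ᵥ b = b ⬝ᵥ c := dotProduct_comm _ _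
    rw [h2, h3, dotProduct_comm b u]
    ring
  rw [hg, hQv, hz]
  ring

lemma Q_lb (hW : W.PosSemidef) (hT : T.PosSemidef) (hR : R.PosSemidef) (hTT : T * T = R)
    (v u : Fin k → ℝ) :
    v ⬝ᵥ ((W - W * T * (1 + T * W * T)⁻¹ * (T * W)) *ᵥ v)
      ≤ u ⬝ᵥ u + (T *ᵥ u + v) ⬝ᵥ (W *ᵥ (T *ᵥ u + v)) := by
  rw [Q_quad hW hT hR hTT v u]
  have hpsd := (HW_posDef hT hW).posSemidef
  have := hpsd.dotProduct_mulVec_nonneg (u + (1 + T * W * T)⁻¹ *ᵥ (T *ᵥ (W *ᵥ v)))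
  simp only [star_trivial] at this
  linarith

lemma Q_attained (hW : W.PosSemidef) (hT : T.PosSemidef) (hR : R.PosSemidef) (hTT : T * T = R)
    (v : Fin k → ℝ) :
    v ⬝ᵥ ((W - W * T * (1 + T * W * T)⁻¹ * (T * W)) *ᵥ v)
      = (fun u => u ⬝ᵥ u + (T *ᵥ u + v) ⬝ᵥ (W *ᵥ (T *ᵥ u + v)))
          (-((1 + T * W * T)⁻¹ *ᵥ (T *ᵥ (W *ᵥ v)))) := by
  simp only
  rw [Q_quad hW hT hR hTT v _]
  simp

end Qvar

lemma Q_mono {W1 W2 R S1 S2 T : Matrix (Fin k) (Fin k) ℝ}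
    (hW1 : W1.PosSemidef) (hW2 : W2.PosSemidef) (hdeg : (W1 - W2).PosSemidef)
    (hR : R.PosSemidef)
    (hS1 : S1.PosSemidef) (hSS1 : S1 * S1 = W1)
    (hS2 : S2.PosSemidef) (hSS2 : S2 * S2 = W2)
    (hT : T.PosSemidef) (hTT : T * T = R) :
    (S1 * (1 + S1 * R * S1)⁻¹ * S1 - S2 * (1 + S2 * R * S2)⁻¹ * S2).PosSemidef := by
  have hQ1 := Qm_psd hS1 hR
  have hQ2 := Qm_psd hS2 hR
  refine .of_dotProduct_mulVec_nonneg (hQ1.1.sub hQ2.1) fun x => ?_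
  simp only [star_trivial, Matrix.sub_mulVec, dotProduct_sub]
  rw [sub_nonneg, Q_id2 hS1 hR hW1 hT hSS1 hTT, Q_id2 hS2 hR hW2 hT hSS2 hTT]
  set u1 := -((1 + T * W1 * T)⁻¹ *ᵥ (T *ᵥ (W1 *ᵥ x))) with hu1
  calc x ⬝ᵥ ((W2 - W2 * T * (1 + T * W2 * T)⁻¹ * (T * W2)) *ᵥ x)
      ≤ u1 ⬝ᵥ u1 + (T *ᵥ u1 + x) ⬝ᵥ (W2 *ᵥ (T *ᵥ u1 + x)) := Q_lb hW2 hT hR hTT x u1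
    _ ≤ u1 ⬝ᵥ u1 + (T *ᵥ u1 + x) ⬝ᵥ (W1 *ᵥ (T *ᵥ u1 + x)) := by
        have := hdeg.dotProduct_mulVec_nonneg (T *ᵥ u1 + x)
        simp only [star_trivial, Matrix.sub_mulVec, dotProduct_sub] at this
        linarith
    _ = x ⬝ᵥ ((W1 - W1 * T * (1 + T * W1 * T)⁻¹ * (T * W1)) *ᵥ x) :=
        (Q_attained hW1 hT hR hTT x).symm

lemma key {Q D Δ : Matrix (Fin k) (Fin k) ℝ} (hQ : Q.PosSemidef) (hD : D.PosSemidef)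
    (hΔ : Δ.IsHermitian)
    (hdets : ∀ s ∈ Set.Icc (0:ℝ) 1, 0 < (1 + (Q + s • D) * Δ).det)
    (hpd : (1 + hQ.sqrt * Δ * hQ.sqrt).PosDef) :
    Real.log (1 + (Q + D) * Δ).det ≤ Real.log (1 + Q * Δ).det + (D * Δ).trace := by
  set SQ := hQ.sqrt with hSQ
  have hSQh : SQᴴ = SQ := hQ.posSemidef_sqrt.1
  have hSQQ : SQ * SQ = Q := hQ.sqrt_mul_self
  set P := 1 + Q * Δ with hP
  have hPdet : 0 < P.det := by
    have := hdets 0 ⟨le_refl _, by norm_num⟩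
    simpa using this
  have hPunit : IsUnit P.det := isUnit_iff_ne_zero.mpr (ne_of_gt hPdet)
  set N := (1 + SQ * Δ * SQ)⁻¹ with hN
  have hNpd : N.PosDef := hpd.inv
  have hNherm : N.IsHermitian := hNpd.isHermitian
  have hNunit : IsUnit (1 + SQ * Δ * SQ).det := isUnit_iff_ne_zero.mpr (ne_of_gt hpd.det_pos)
  set J : Matrix (Fin k) (Fin k) ℝ := Δ - Δ * SQ * N * (SQ * Δ) with hJ
  -- J * P = Δ
  have hJP : J * P = Δ := by
    have h1 : SQ * Δ * (1 + Q * Δ) = (1 + SQ * Δ * SQ) * (SQ * Δ) := by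
      rw [Matrix.mul_add, Matrix.mul_one, Matrix.add_mul, Matrix.one_mul]
      rw [← hSQQ]
      simp only [Matrix.mul_assoc]
    have hNcancel : N * ((1 + SQ * (Δ * SQ)) * (SQ * Δ)) = SQ * Δ := by
      rw [← Matrix.mul_assoc, show (1 + SQ * (Δ * SQ)) = 1 + SQ * Δ * SQ by
        rw [Matrix.mul_assoc], Matrix.nonsing_inv_mul _ hNunit, Matrix.one_mul]
    have h2 : Δ * SQ * N * (SQ * Δ * (1 + Q * Δ)) = Δ * SQ * (SQ * Δ) := by
      rw [h1]
      simp only [Matrix.mul_assoc]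
      rw [hNcancel]
    calc J * P = Δ * (1 + Q * Δ) - Δ * SQ * N * (SQ * Δ * (1 + Q * Δ)) := by
          rw [hJ, Matrix.sub_mul]; simp only [Matrix.mul_assoc]; rfl
      _ = Δ + Δ * (Q * Δ) - Δ * (Q * Δ) := by
          rw [h2, Matrix.mul_add, Matrix.mul_one, ← hSQQ]; simp only [Matrix.mul_assoc]
      _ = Δ := by abel
  have hJeq : Δ * P⁻¹ = J := by
    rw [← hJP, Matrix.mul_assoc, Matrix.mul_nonsing_inv _ hPunit, Matrix.mul_one]
  -- Δ - J is psd
  have hDmJ : (Δ - J).PosSemidef := by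
    have h3 : Δ - J = (SQ * Δ)ᴴ * N * (SQ * Δ) := by
      rw [hJ, Matrix.conjTranspose_mul, hSQh, hΔ]
      abel
    rw [h3]
    exact hNpd.posSemidef.conjTranspose_mul_mul_same _
  have hJherm : J.IsHermitian := by
    have := hDmJ.1
    have h4 : Δ - (Δ - J) = J := by abel
    rw [← h4]
    exact hΔ.sub hDmJ.1
  -- the trace comparison
  have htr : (D * J).trace ≤ (D * Δ).trace := by
    have h5 : (D * (Δ - J)).trace = (D * Δ).trace - (D * J).trace := by
      rw [Matrix.mul_sub, Matrix.trace_sub]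
    have := trace_mul_psd_nonneg hD hDmJ
    rw [h5] at this
    linarith
  set SD := hD.sqrt with hSD
  have hSDh : SDᴴ = SD := hD.posSemidef_sqrt.1
  have hSDD : SD * SD = D := hD.sqrt_mul_self
  set K := SD * J * SD with hK
  have hKherm : K.IsHermitian := by
    unfold Matrix.IsHermitian
    rw [hK, Matrix.conjTranspose_mul, Matrix.conjTranspose_mul, hSDh, hJherm.eq]
    simp only [Matrix.mul_assoc]
  -- determinant identity for all s
  have hdetK : ∀ s : ℝ, (1 + s • K).det * P.det = (1 + (Q + s • D) * Δ).det := by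
    intro s
    have h6 : (1 + s • K) = 1 + SD * (s • J) * SD := by
      rw [hK, Matrix.mul_smul, Matrix.smul_mul]
    have h7 : (1 + D * (s • J)).det = (1 + SD * (s • J) * SD).det := det_one_add_psd_mul hD
    have h8 : (1 + D * (s • J)) * P = 1 + (Q + s • D) * Δ := by
      rw [Matrix.add_mul, Matrix.one_mul, hP]
      have h9 : D * (s • J) * (1 + Q * Δ) = s • (D * Δ) := by
        rw [Matrix.mul_smul, Matrix.smul_mul]
        congr 1
        rw [Matrix.mul_assoc, ← hP, hJP]
      rw [h9, Matrix.add_mul, Matrix.smul_mul]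
      abel
    rw [h6, ← h7, ← h8, Matrix.det_mul]
  have hdets2 : ∀ s ∈ Set.Icc (0:ℝ) 1, 0 < (1 + s • K).det := by
    intro s hs
    have := hdets s hs
    have h10 := hdetK s
    nlinarith
  have hKpd : (1 + K).PosDef := posDef_one_add_of_dets hKherm hdets2
  -- final chain
  have hdet1 : (1 + (Q + D) * Δ).det = (1 + K).det * P.det := by
    have := hdetK 1
    simpa using this.symm
  have htrK : (1 + K).trace = k + (D * J).trace := by
    rw [Matrix.trace_add, Matrix.trace_one, hK, Matrix.trace_mul_cycle, hSDD]
    simp [Fintype.card_fin]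
  calc Real.log (1 + (Q + D) * Δ).det = Real.log (1 + K).det + Real.log P.det := by
        rw [hdet1, Real.log_mul (ne_of_gt hKpd.det_pos) (ne_of_gt hPdet)]
    _ ≤ ((1 + K).trace - k) + Real.log P.det := by
        have := log_det_le_trace hKpd
        linarith
    _ = (D * J).trace + Real.log P.det := by rw [htrK]; ring
    _ ≤ Real.log (1 + Q * Δ).det + (D * Δ).trace := by
        rw [hP]
        linarith

lemma herm_transpose {M : Matrix (Fin k) (Fin k) ℝ} (hM : M.IsHermitian) : Mᵀ = M := by
  have := hM
  rwa [Matrix.IsHermitian, conjTranspose_eq_transpose_of_trivial] at this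

lemma base_pd {W R S T : Matrix (Fin k) (Fin k) ℝ}
    (hS : S.PosSemidef) (hR : R.PosSemidef) (hW : W.PosSemidef) (hT : T.PosSemidef)
    (hSS : S * S = W) (hTT : T * T = R) :
    (1 - T * (S * (1 + S * R * S)⁻¹ * S) * T).PosDef := by
  set Qq := S * (1 + S * R * S)⁻¹ * S with hQq
  have h0 := Q_id1 hS hR hSS
  rw [Matrix.add_mul, Matrix.one_mul, ← hQq] at h0
  have h1 : W * R * Qq = W - Qq := by
    rw [eq_sub_iff_add_eq, add_comm]
    exact h0
  have hiden : (1 + T * W * T) * (1 - T * Qq * T) = 1 := by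
    rw [Matrix.mul_sub, Matrix.mul_one, Matrix.add_mul, Matrix.one_mul]
    have h2 : T * W * T * (T * Qq * T) = T * (W - Qq) * T := by
      rw [← h1]
      calc T * W * T * (T * Qq * T) = T * (W * (T * (T * (Qq * T)))) := by
            simp only [Matrix.mul_assoc]
        _ = T * (W * (R * (Qq * T))) := by rw [← Matrix.mul_assoc T _ (Qq * T), hTT]
        _ = T * (W * R * Qq) * T := by simp only [Matrix.mul_assoc]
    rw [h2, Matrix.mul_sub T W Qq, Matrix.sub_mul]
    abel
  have hinv : (1 - T * Qq * T) = (1 + T * W * T)⁻¹ := (Matrix.inv_eq_right_inv hiden).symm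
  rw [hinv]
  exact (HW_posDef hT hW).inv

lemma pd_comb {A B : Matrix (Fin k) (Fin k) ℝ} (hA : A.PosDef) (hB : B.PosDef) {s : ℝ}
    (h0 : 0 ≤ s) (h1 : s ≤ 1) : ((1 - s) • A + s • B).PosDef := by
  refine PosDef.of_dotProduct_mulVec_pos ?_ ?_
  · show ((1 - s) • A + s • B)ᴴ = _
    rw [conjTranspose_add, conjTranspose_smul, conjTranspose_smul, hA.1.eq, hB.1.eq]
    simp [star_trivial]
  · intro x hx
    have ha := hA.dotProduct_mulVec_pos hx
    have hb := hB.dotProduct_mulVec_pos hx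
    simp only [star_trivial, Matrix.add_mulVec, smul_mulVec, dotProduct_add,
      dotProduct_smul, smul_eq_mul] at ha hb ⊢
    rcases eq_or_lt_of_le h1 with rfl | hlt
    · simpa using hb
    · have := add_pos_of_pos_of_nonneg (mul_pos (by linarith : (0:ℝ) < 1 - s) ha)
        (mul_nonneg h0 hb.le)
      exact this
lemma stepA {X Rl Rj T : Matrix (Fin k) (Fin k) ℝ} (hX : X.PosSemidef)
    (hRj : Rj.PosSemidef) (hT : T.PosSemidef) (hTT : T * T = Rl)
    (hbase : (1 - T * X * T).PosDef) :
    (1 + hX.sqrt * (Rj - Rl) * hX.sqrt).PosDef := by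
  set SX := hX.sqrt with hSX
  have hSXpsd : SX.PosSemidef := hX.posSemidef_sqrt
  have hSXt : SXᵀ = SX := herm_transpose hSXpsd.1
  have hTt : Tᵀ = T := herm_transpose hT.1
  have hSX2 : SX * SX = X := hX.sqrt_mul_self
  set A := SX * T with hA
  have hAt : Aᵀ = T * SX := by rw [hA, Matrix.transpose_mul, hSXt, hTt]
  have h1 : Aᵀ * A = T * X * T := by
    rw [hAt, hA]
    calc T * SX * (SX * T) = T * (SX * SX) * T := by simp only [Matrix.mul_assoc]
      _ = T * X * T := by rw [hSX2]
  have h2 : A * Aᵀ = SX * Rl * SX := by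
    rw [hAt, hA]
    calc SX * T * (T * SX) = SX * (T * T) * SX := by simp only [Matrix.mul_assoc]
      _ = SX * Rl * SX := by rw [hTT]
  have hswap : (1 - SX * Rl * SX).PosDef := by
    rw [← h2]
    refine swap_posDef ?_
    rw [h1]
    exact hbase
  have h3 : 1 + SX * (Rj - Rl) * SX = (1 - SX * Rl * SX) + SX * Rj * SX := by
    rw [Matrix.mul_sub, Matrix.sub_mul]
    abel
  rw [h3]
  refine Matrix.PosDef.add_posSemidef hswap ?_
  have := hRj.mul_mul_conjTranspose_same SX
  rwa [hSXpsd.1] at this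

lemma det_pos_one_add {W R : Matrix (Fin k) (Fin k) ℝ} (hW : W.PosSemidef)
    (hR : R.PosSemidef) : 0 < (1 + W * R).det := by
  rw [det_one_add_psd_mul hW]
  have hs : (hW.sqrt * R * hW.sqrt).PosSemidef := by
    have := hR.mul_mul_conjTranspose_same hW.sqrt
    rwa [hW.posSemidef_sqrt.1] at this
  exact (posDef_one_add_psd hs).det_pos

lemma shift_det {W Rl S : Matrix (Fin k) (Fin k) ℝ} (hS : S.PosSemidef) (hRl : Rl.PosSemidef)
    (hSS : S * S = W) (R' : Matrix (Fin k) (Fin k) ℝ) :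
    (1 + W * R').det
      = (1 + W * Rl).det * (1 + (S * (1 + S * Rl * S)⁻¹ * S) * (R' - Rl)).det := by
  set Qq := S * (1 + S * Rl * S)⁻¹ * S with hQq
  have hmul : (1 + W * Rl) * (1 + Qq * (R' - Rl)) = 1 + W * R' := by
    rw [Matrix.mul_add, Matrix.mul_one, ← Matrix.mul_assoc, hQq, Q_id1 hS hRl hSS,
      Matrix.mul_sub]
    abel
  rw [← hmul, Matrix.det_mul]

lemma concave_core {W1 W2 R1 R2 : Matrix (Fin k) (Fin k) ℝ}
    (hW1 : W1.PosSemidef) (hW2 : W2.PosSemidef) (hdeg : (W1 - W2).PosSemidef)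
    (hR1 : R1.PosSemidef) (hR2 : R2.PosSemidef) {l : ℝ} (hl0 : 0 ≤ l) (hl1 : l ≤ 1) :
    l * (Real.log (1 + W1 * R1).det - Real.log (1 + W2 * R1).det) +
      (1 - l) * (Real.log (1 + W1 * R2).det - Real.log (1 + W2 * R2).det) ≤
    Real.log (1 + W1 * (l • R1 + (1 - l) • R2)).det -
      Real.log (1 + W2 * (l • R1 + (1 - l) • R2)).det := by
  set Rl : Matrix (Fin k) (Fin k) ℝ := l • R1 + (1 - l) • R2 with hRldef
  have hRl : Rl.PosSemidef := (psd_smul hR1 hl0).add (psd_smul hR2 (by linarith))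
  set T := hRl.sqrt with hTdef
  have hT : T.PosSemidef := hRl.posSemidef_sqrt
  have hTT : T * T = Rl := hRl.sqrt_mul_self
  set S1 := hW1.sqrt with hS1def
  have hS1 : S1.PosSemidef := hW1.posSemidef_sqrt
  have hSS1 : S1 * S1 = W1 := hW1.sqrt_mul_self
  set S2 := hW2.sqrt with hS2def
  have hS2 : S2.PosSemidef := hW2.posSemidef_sqrt
  have hSS2 : S2 * S2 = W2 := hW2.sqrt_mul_self
  set Q1 := S1 * (1 + S1 * Rl * S1)⁻¹ * S1 with hQ1def
  set Q2 := S2 * (1 + S2 * Rl * S2)⁻¹ * S2 with hQ2def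
  have hQ1 : Q1.PosSemidef := Qm_psd hS1 hRl
  have hQ2 : Q2.PosSemidef := Qm_psd hS2 hRl
  have hD : (Q1 - Q2).PosSemidef := Q_mono hW1 hW2 hdeg hRl hS1 hSS1 hS2 hSS2 hT hTT
  have hbase1 : (1 - T * Q1 * T).PosDef := base_pd hS1 hRl hW1 hT hSS1 hTT
  have hbase2 : (1 - T * Q2 * T).PosDef := base_pd hS2 hRl hW2 hT hSS2 hTT
  -- positivity of dets for combos
  have hbase_s : ∀ s : ℝ, 0 ≤ s → s ≤ 1 → (1 - T * (Q2 + s • (Q1 - Q2)) * T).PosDef := by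
    intro s hs0 hs1
    have hiden : 1 - T * (Q2 + s • (Q1 - Q2)) * T
        = (1 - s) • (1 - T * Q2 * T) + s • (1 - T * Q1 * T) := by
      have he : T * (Q2 + s • (Q1 - Q2)) * T
          = T * Q2 * T + s • (T * Q1 * T - T * Q2 * T) := by
        rw [Matrix.mul_add, Matrix.add_mul, Matrix.mul_smul, Matrix.smul_mul,
          Matrix.mul_sub, Matrix.sub_mul]
      rw [he]
      module
    rw [hiden]
    exact pd_comb hbase2 hbase1 hs0 hs1
  have hdets : ∀ (Rj : Matrix (Fin k) (Fin k) ℝ), Rj.PosSemidef →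
      ∀ s ∈ Set.Icc (0:ℝ) 1, 0 < (1 + (Q2 + s • (Q1 - Q2)) * (Rj - Rl)).det := by
    intro Rj hRj s hs
    have hXs : (Q2 + s • (Q1 - Q2)).PosSemidef := hQ2.add (psd_smul hD hs.1)
    rw [det_one_add_psd_mul hXs]
    exact (stepA hXs hRj hT hTT (hbase_s s hs.1 hs.2)).det_pos
  have hpd2 : ∀ (Rj : Matrix (Fin k) (Fin k) ℝ), Rj.PosSemidef →
      (1 + hQ2.sqrt * (Rj - Rl) * hQ2.sqrt).PosDef := by
    intro Rj hRj
    exact stepA hQ2 hRj hT hTT hbase2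
  -- key applications
  have hQ12 : Q2 + (Q1 - Q2) = Q1 := by abel
  have hkey : ∀ (Rj : Matrix (Fin k) (Fin k) ℝ), Rj.PosSemidef →
      Real.log (1 + Q1 * (Rj - Rl)).det ≤ Real.log (1 + Q2 * (Rj - Rl)).det
        + ((Q1 - Q2) * (Rj - Rl)).trace := by
    intro Rj hRj
    have hherm : (Rj - Rl).IsHermitian := hRj.1.sub hRl.1
    have := key hQ2 hD hherm (hdets Rj hRj) (hpd2 Rj hRj)
    rwa [hQ12] at this
  -- log translations
  have hshift : ∀ (W S : Matrix (Fin k) (Fin k) ℝ) (hS' : S.PosSemidef) (hSS' : S * S = W)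
      (hW' : W.PosSemidef) (Rj : Matrix (Fin k) (Fin k) ℝ), Rj.PosSemidef →
      Real.log (1 + W * Rj).det = Real.log (1 + W * Rl).det
        + Real.log (1 + (S * (1 + S * Rl * S)⁻¹ * S) * (Rj - Rl)).det := by
    intro W S hS' hSS' hW' Rj hRj
    rw [shift_det hS' hRl hSS' Rj, Real.log_mul]
    · exact ne_of_gt (det_pos_one_add hW' hRl)
    · have h1 : (0:ℝ) < (1 + W * Rj).det := det_pos_one_add hW' hRj
      have h2 : (0:ℝ) < (1 + W * Rl).det := det_pos_one_add hW' hRl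
      have := shift_det hS' hRl hSS' Rj
      intro hzero
      rw [hzero, mul_zero] at this
      linarith
  -- trace cancellation
  have htr0 : l • (R1 - Rl) + (1 - l) • (R2 - Rl) = 0 := by
    rw [hRldef]
    module
  have htrsum : l * ((Q1 - Q2) * (R1 - Rl)).trace
      + (1 - l) * ((Q1 - Q2) * (R2 - Rl)).trace = 0 := by
    have expand : l • ((Q1 - Q2) * (R1 - Rl)) + (1 - l) • ((Q1 - Q2) * (R2 - Rl))
        = (Q1 - Q2) * (l • (R1 - Rl) + (1 - l) • (R2 - Rl)) := by
      rw [Matrix.mul_add, Matrix.mul_smul, Matrix.mul_smul]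
    have := congrArg Matrix.trace expand
    rw [htr0, Matrix.mul_zero, Matrix.trace_zero, Matrix.trace_add, Matrix.trace_smul,
      Matrix.trace_smul] at this
    simpa using this
  -- final computation
  have e11 := hshift W1 S1 hS1 hSS1 hW1 R1 hR1
  have e12 := hshift W1 S1 hS1 hSS1 hW1 R2 hR2
  have e21 := hshift W2 S2 hS2 hSS2 hW2 R1 hR1
  have e22 := hshift W2 S2 hS2 hSS2 hW2 R2 hR2
  have k1 := hkey R1 hR1
  have k2 := hkey R2 hR2
  rw [← hQ2def] at e21 e22
  have K1 : l * Real.log (1 + Q1 * (R1 - Rl)).det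
      ≤ l * (Real.log (1 + Q2 * (R1 - Rl)).det + ((Q1 - Q2) * (R1 - Rl)).trace) :=
    mul_le_mul_of_nonneg_left k1 hl0
  have K2 : (1 - l) * Real.log (1 + Q1 * (R2 - Rl)).det
      ≤ (1 - l) * (Real.log (1 + Q2 * (R2 - Rl)).det + ((Q1 - Q2) * (R2 - Rl)).trace) :=
    mul_le_mul_of_nonneg_left k2 (by linarith)
  rw [e11, e12, e21, e22]
  linarith [K1, K2, htrsum]


end Helpers

/-- In the degraded case `W1 ≥ W2 ⪰ 0`, the secrecy rate
`C(R) = ½(ln det(I + W1 R) - ln det(I + W2 R))` is nonnegative for all `R ⪰ 0`, and is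
concave on the cone of positive semidefinite matrices. -/
theorem secrecy_rate_nonneg_and_concave_degraded
    {m : ℕ} (W1 W2 : Matrix (Fin m) (Fin m) ℝ)
    (hW1 : W1.PosSemidef) (hW2 : W2.PosSemidef) (hdeg : (W1 - W2).PosSemidef) :
    (∀ R : Matrix (Fin m) (Fin m) ℝ, R.PosSemidef →
      0 ≤ (1 / 2 : ℝ) * (Real.log (1 + W1 * R).det - Real.log (1 + W2 * R).det)) ∧
    (∀ R1 R2 : Matrix (Fin m) (Fin m) ℝ, R1.PosSemidef → R2.PosSemidef →
      ∀ l : ℝ, l ∈ Set.Icc (0 : ℝ) 1 →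
        l * ((1 / 2 : ℝ) * (Real.log (1 + W1 * R1).det - Real.log (1 + W2 * R1).det)) +
          (1 - l) * ((1 / 2 : ℝ) *
            (Real.log (1 + W1 * R2).det - Real.log (1 + W2 * R2).det)) ≤
        (1 / 2 : ℝ) * (Real.log (1 + W1 * (l • R1 + (1 - l) • R2)).det -
          Real.log (1 + W2 * (l • R1 + (1 - l) • R2)).det)) := by
  constructor
  · intro R hR
    have h2pos : 0 < (1 + W2 * R).det := det_pos_one_add hW2 hR
    have hdets : (1 + W2 * R).det ≤ (1 + W1 * R).det := by
      have c2 : (1 + W2 * R).det = (1 + hR.sqrt * W2 * hR.sqrt).det := by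
        rw [Matrix.det_one_add_mul_comm, det_one_add_psd_mul hR]
      have c1 : (1 + W1 * R).det = (1 + hR.sqrt * W1 * hR.sqrt).det := by
        rw [Matrix.det_one_add_mul_comm, det_one_add_psd_mul hR]
      have hsum : 1 + hR.sqrt * W1 * hR.sqrt
          = (1 + hR.sqrt * W2 * hR.sqrt) + hR.sqrt * (W1 - W2) * hR.sqrt := by
        rw [Matrix.mul_sub, Matrix.sub_mul]
        abel
      have hH : (1 + hR.sqrt * W2 * hR.sqrt).PosDef := by
        refine posDef_one_add_psd ?_
        have := hW2.mul_mul_conjTranspose_same hR.sqrt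
        rwa [hR.posSemidef_sqrt.1] at this
      have hP : (hR.sqrt * (W1 - W2) * hR.sqrt).PosSemidef := by
        have := hdeg.mul_mul_conjTranspose_same hR.sqrt
        rwa [hR.posSemidef_sqrt.1] at this
      rw [c1, c2, hsum]
      exact det_le_det_add_psd hH hP
    have hlog : Real.log (1 + W2 * R).det ≤ Real.log (1 + W1 * R).det := by
      exact Real.log_le_log h2pos hdets
    linarith
  · intro R1 R2 hR1 hR2 l hl
    obtain ⟨hl0, hl1⟩ := hl
    have hcore := concave_core hW1 hW2 hdeg hR1 hR2 hl0 hl1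
    linarith
end

section
/- For symmetric positive semidefinite matrices A, B, R (all m×m), det(I + (A+B)R) ≥ det(I + A R); i.e., adding a positive semidefinite term to the 'channel Gram matrix' cannot decrease the log-det mutual information. -/
open Matrix
open scoped MatrixOrder

private lemma one_le_det_one_add {n : ℕ} (U : Matrix (Fin n) (Fin n) ℝ)
    (hU : U.PosSemidef) : 1 ≤ (1 + U).det := by
  have h := hU.isHermitian
  set V : Matrix (Fin n) (Fin n) ℝ := (h.eigenvectorUnitary : Matrix (Fin n) (Fin n) ℝ) with hVdef
  have hV : V * star V = 1 := mem_unitaryGroup_iff.mp h.eigenvectorUnitary.2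
  set D : Matrix (Fin n) (Fin n) ℝ := diagonal (RCLike.ofReal ∘ h.eigenvalues) with hDdef
  have key : 1 + U = V * (1 + D) * star V := by
    rw [mul_add, add_mul, mul_one, hV]
    congr 1
    exact h.spectral_theorem
  have hV' : star V * V = 1 := mem_unitaryGroup_iff'.mp h.eigenvectorUnitary.2
  have hdet : (1 + U).det = (1 + D).det := by
    rw [key, det_mul, det_mul, mul_comm, ← mul_assoc, ← det_mul, hV', det_one, one_mul]
  rw [hdet, hDdef]
  have : (1 : Matrix (Fin n) (Fin n) ℝ) + diagonal (RCLike.ofReal ∘ h.eigenvalues)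
      = diagonal (fun i => 1 + h.eigenvalues i) := by
    rw [← diagonal_one, diagonal_add]
    congr 1
  rw [this, det_diagonal]
  have h1 : ∀ i ∈ Finset.univ, (1:ℝ) ≤ 1 + h.eigenvalues i := fun i _ => by
    have := hU.eigenvalues_nonneg i; linarith
  calc (1:ℝ) = ∏ _i : Fin n, (1:ℝ) := by simp
    _ ≤ ∏ i, (1 + h.eigenvalues i) :=
      Finset.prod_le_prod (fun i _ => by norm_num) h1

private lemma det_one_add_le_det_one_add_add {n : ℕ} (S T : Matrix (Fin n) (Fin n) ℝ)
    (hS : S.PosSemidef) (hT : T.PosSemidef) : (1 + S).det ≤ (1 + S + T).det := by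
  have hP : (1 + S).PosDef := Matrix.PosDef.add_posSemidef Matrix.PosDef.one hS
  set W := CFC.sqrt (1 + S) with hWdef
  have hW : W.PosSemidef := (CFC.sqrt_nonneg (1 + S)).posSemidef
  have hWW : W * W = 1 + S := CFC.sqrt_mul_sqrt_self (1 + S) hP.posSemidef.nonneg
  have hdetP : 0 < (1 + S).det := hP.det_pos
  have hdetW : W.det ≠ 0 := by
    intro h0
    rw [← hWW, det_mul, h0, mul_zero] at hdetP
    exact lt_irrefl _ hdetP
  have hWinv : W * W⁻¹ = 1 := mul_nonsing_inv W hdetW.isUnit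
  have hWinv' : W⁻¹ * W = 1 := nonsing_inv_mul W hdetW.isUnit
  set K := W⁻¹ * T * W⁻¹ with hKdef
  have hK : K.PosSemidef := by
    have := hT.conjTranspose_mul_mul_same W⁻¹
    rwa [(hW.inv.isHermitian : (W⁻¹)ᴴ = W⁻¹)] at this
  have hconj : W * (W⁻¹ * T * W⁻¹) * W = T := by
    calc W * (W⁻¹ * T * W⁻¹) * W = W * W⁻¹ * (T * (W⁻¹ * W)) := by
          simp only [Matrix.mul_assoc]
      _ = T := by rw [hWinv, hWinv', Matrix.one_mul, Matrix.mul_one]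
  have key : 1 + S + T = W * (1 + K) * W := by
    rw [mul_add, add_mul, mul_one, hWW, hKdef, hconj]
  have hdet : (1 + S + T).det = (1 + S).det * (1 + K).det := by
    rw [key, det_mul, det_mul, ← hWW, det_mul]
    ring
  rw [hdet]
  nlinarith [one_le_det_one_add K hK, hdetP]

/-- For positive semidefinite `A`, `B`, `R`: `det(I + (A+B)R) ≥ det(I + A R)`. -/
theorem det_one_add_mul_mono
    {m : ℕ} (A B R : Matrix (Fin m) (Fin m) ℝ)
    (hA : A.PosSemidef) (hB : B.PosSemidef) (hR : R.PosSemidef) :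
    (1 + A * R).det ≤ (1 + (A + B) * R).det := by
  set r := CFC.sqrt R with hrdef
  have hr : r.PosSemidef := (CFC.sqrt_nonneg R).posSemidef
  have hrr : r * r = R := CFC.sqrt_mul_sqrt_self R hR.nonneg
  have hrh : rᴴ = r := hr.isHermitian
  have conj : ∀ (M : Matrix (Fin m) (Fin m) ℝ), (1 + M * R).det = (1 + r * M * r).det := by
    intro M
    rw [← hrr, ← Matrix.mul_assoc, Matrix.det_one_add_mul_comm, Matrix.mul_assoc]
  rw [conj A, conj (A + B)]
  have hsplit : r * (A + B) * r = r * A * r + r * B * r := by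
    rw [Matrix.mul_add, Matrix.add_mul]
  rw [hsplit, ← add_assoc]
  have hS : (r * A * r).PosSemidef := by
    have := hA.conjTranspose_mul_mul_same r
    rwa [hrh] at this
  have hT : (r * B * r).PosSemidef := by
    have := hB.conjTranspose_mul_mul_same r
    rwa [hrh] at this
  exact det_one_add_le_det_one_add_add _ _ hS hT
end
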